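/- arXiv:2105.09238 — 3 statements merged into one kernel-verified Lean document; each statement's English description precedes it below -/
import Mathlib

section
/- If L, L_1, L_2 are linear relations with L = L_1 + L_2 (coefficientwise) and |L_1| ⊊ |L|, |L_2| ⊊ |L|, then for every subset S ⊆ |L| the element P_{L,S} lies in the ideal of Ξ generated by the elements P_{L_1,T} for T ⊆ |L_1| together with the elements P_{L_2,T'} for T' ⊆ |L_2|. -/
open scoped TensorProduct
open MvPolynomial

set_option maxHeartbeats 1000000
noncomputable section

def zpoly {F : Type} [Field F] {n m : ℕ} (c : Fin m → Fin n → F) (i : Fin m) :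
    MvPolynomial (Fin n) F :=
  ∑ j, C (c i j) * X j

def lsupp {F : Type} [Field F] {m : ℕ} (a : Fin m → F) : Finset (Fin m) :=
  @Finset.filter _ (fun i => a i ≠ 0) (Classical.decPred _) Finset.univ

def IsLinRel {F : Type} [Field F] {n m : ℕ} (c : Fin m → Fin n → F) (a : Fin m → F) : Prop :=
  2 ≤ (lsupp a).card ∧ ∑ i ∈ lsupp a, C (a i) * zpoly c i = 0

def tMon {F : Type} [Field F] {m : ℕ} (M : Finset (Fin m)) : MvPolynomial (Fin m) F :=
  ∏ i ∈ M, X i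

def PL {F : Type} [Field F] {m : ℕ} (a : Fin m → F) : MvPolynomial (Fin m) F :=
  ∑ i ∈ lsupp a, C (a i) * tMon (lsupp a \ {i})

abbrev ExtAlg (F : Type) [Field F] (k : ℕ) := ExteriorAlgebra F (Fin k → F)

def uGen {F : Type} [Field F] {m : ℕ} (i : Fin m) : ExtAlg F m :=
  ExteriorAlgebra.ι F (Pi.single i 1)

def uList {F : Type} [Field F] {m : ℕ} (l : List (Fin m)) : ExtAlg F m :=
  (l.map uGen).prod

def uM {F : Type} [Field F] {m : ℕ} (M : Finset (Fin m)) : ExtAlg F m :=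
  uList (M.sort (· ≤ ·))

abbrev XiAlg (F : Type) [Field F] (m : ℕ) := MvPolynomial (Fin m) F ⊗[F] ExtAlg F m

def PLS {F : Type} [Field F] {m : ℕ} (a : Fin m → F) (S : Finset (Fin m)) : XiAlg F m :=
  ∑ i ∈ lsupp a \ S,
    (C (a i) * tMon (lsupp a \ insert i S)) ⊗ₜ[F]
      (uM S - ∑ s ∈ Finset.range (S.sort (· ≤ ·)).length, uList ((S.sort (· ≤ ·)).set s i))

namespace St13
variable {F : Type} [Field F] {m : ℕ}

lemma iota_anticomm (v w : Fin m → F) :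
    ExteriorAlgebra.ι F v * ExteriorAlgebra.ι F w = -(ExteriorAlgebra.ι F w * ExteriorAlgebra.ι F v) := by
  have h := ExteriorAlgebra.ι_sq_zero (R := F) (v + w)
  rw [map_add, add_mul, mul_add, mul_add, ExteriorAlgebra.ι_sq_zero, ExteriorAlgebra.ι_sq_zero] at h
  rw [add_zero, zero_add] at h
  rw [eq_neg_iff_add_eq_zero]
  exact h

def Wfac (i j : Fin m) : ExteriorAlgebra F (Fin m → F) := uGen j - uGen i

lemma Wfac_eq_iota (i j : Fin m) :
    Wfac i j = ExteriorAlgebra.ι F (Pi.single j 1 - Pi.single i 1) := by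
  rw [map_sub]; rfl

lemma Wfac_self (i : Fin m) : (Wfac i i : ExteriorAlgebra F (Fin m → F)) = 0 := sub_self _

def Wprod (i : Fin m) (l : List (Fin m)) : ExteriorAlgebra F (Fin m → F) :=
  (l.map (Wfac i)).prod

@[simp] lemma Wprod_nil (i : Fin m) : (Wprod i [] : ExteriorAlgebra F (Fin m → F)) = 1 := rfl

@[simp] lemma Wprod_cons (i j : Fin m) (l : List (Fin m)) :
    (Wprod i (j :: l) : ExteriorAlgebra F (Fin m → F)) = Wfac i j * Wprod i l := by
  simp [Wprod]

lemma Wprod_append (i : Fin m) (l l' : List (Fin m)) :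
    (Wprod i (l ++ l') : ExteriorAlgebra F (Fin m → F)) = Wprod i l * Wprod i l' := by
  simp [Wprod]

@[simp] lemma uList_nil : (uList ([] : List (Fin m)) : ExteriorAlgebra F (Fin m → F)) = 1 := rfl

@[simp] lemma uList_cons (j : Fin m) (l : List (Fin m)) :
    (uList (j :: l) : ExteriorAlgebra F (Fin m → F)) = uGen j * uList l := by
  simp [uList]

lemma uList_append (l l' : List (Fin m)) :
    (uList (l ++ l') : ExteriorAlgebra F (Fin m → F)) = uList l * uList l' := by
  simp [uList]

lemma uGen_anticomm (i j : Fin m) :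
    (uGen i * uGen j : ExteriorAlgebra F (Fin m → F)) = -(uGen j * uGen i) :=
  iota_anticomm _ _

lemma uGen_sq (i : Fin m) : (uGen i * uGen i : ExteriorAlgebra F (Fin m → F)) = 0 :=
  ExteriorAlgebra.ι_sq_zero _

lemma uGen_mul_uList_of_mem {i : Fin m} {l : List (Fin m)} (h : i ∈ l) :
    (uGen i * uList l : ExteriorAlgebra F (Fin m → F)) = 0 := by
  induction l with
  | nil => simp at h
  | cons j l ih =>
    rcases List.mem_cons.mp h with rfl | h
    · rw [uList_cons, ← mul_assoc, uGen_sq, zero_mul]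
    · rw [uList_cons, ← mul_assoc, uGen_anticomm, neg_mul, mul_assoc, ih h, mul_zero, neg_zero]

lemma uGen_mul_uList (k : Fin m) (l : List (Fin m)) :
    (uGen k * uList l : ExteriorAlgebra F (Fin m → F))
      = ((-1 : F) ^ l.length) • (uList l * uGen k) := by
  induction l with
  | nil => simp
  | cons j l ih =>
    rw [uList_cons, ← mul_assoc, uGen_anticomm, neg_mul, mul_assoc, ih]
    rw [List.length_cons, pow_succ, mul_smul_comm, mul_assoc, mul_neg_one, neg_smul]

lemma uGen_mul_Wprod (k i : Fin m) (l : List (Fin m)) :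
    (uGen k * Wprod i l : ExteriorAlgebra F (Fin m → F))
      = ((-1 : F) ^ l.length) • (Wprod i l * uGen k) := by
  induction l with
  | nil => simp
  | cons j l ih =>
    have h1 : (uGen k * Wfac i j : ExteriorAlgebra F (Fin m → F)) = -(Wfac i j * uGen k) := by
      rw [Wfac_eq_iota]
      exact iota_anticomm _ _
    rw [Wprod_cons, ← mul_assoc, h1, neg_mul, mul_assoc, ih]
    rw [List.length_cons, pow_succ, mul_smul_comm, mul_assoc, mul_neg_one, neg_smul]

lemma uGen_mul_Wprod_self (i : Fin m) (l : List (Fin m)) :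
    (uGen i * Wprod i l : ExteriorAlgebra F (Fin m → F)) = uGen i * uList l := by
  induction l with
  | nil => simp
  | cons j l ih =>
    have hfac : (uGen i * Wfac i j : ExteriorAlgebra F (Fin m → F)) = uGen i * uGen j := by
      rw [Wfac, mul_sub, uGen_sq, sub_zero]
    rw [Wprod_cons, uList_cons, ← mul_assoc, hfac, ← mul_assoc (uGen i),
      uGen_anticomm i j, neg_mul, neg_mul, mul_assoc, mul_assoc, ih]

lemma Wprod_mul_uGen_self (i : Fin m) (l : List (Fin m)) :
    (Wprod i l * uGen i : ExteriorAlgebra F (Fin m → F)) = uList l * uGen i := by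
  have hsq : ((-1 : F) ^ l.length) * ((-1 : F) ^ l.length) = 1 := by
    rw [← mul_pow]; norm_num
  have h3 : (Wprod i l * uGen i : ExteriorAlgebra F (Fin m → F))
      = ((-1 : F) ^ l.length) • (((-1 : F) ^ l.length) • (Wprod i l * uGen i)) := by
    rw [smul_smul, hsq, one_smul]
  rw [h3, ← uGen_mul_Wprod, uGen_mul_Wprod_self, uGen_mul_uList, smul_smul, hsq, one_smul]

lemma Wprod_eq (i : Fin m) (l : List (Fin m)) :
    (Wprod i l : ExteriorAlgebra F (Fin m → F))
      = uList l - ∑ s ∈ Finset.range l.length, uList (l.set s i) := by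
  induction l with
  | nil => simp
  | cons j l ih =>
    have hz : ∀ s ∈ Finset.range l.length,
        (uGen i * uList (l.set s i) : ExteriorAlgebra F (Fin m → F)) = 0 := by
      intro s hs
      apply uGen_mul_uList_of_mem
      have hlt : s < (l.set s i).length := by
        rw [List.length_set]; exact Finset.mem_range.mp hs
      have h2 := List.getElem_mem hlt
      rwa [List.getElem_set_self hlt] at h2
    rw [Wprod_cons, Wfac, ih, sub_mul, mul_sub, mul_sub, Finset.mul_sum, Finset.mul_sum,
      Finset.sum_congr rfl hz, Finset.sum_const_zero, sub_zero]
    have hlen : (j :: l).length = l.length + 1 := rfl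
    rw [hlen, Finset.sum_range_succ']
    have h0 : (j :: l).set 0 i = i :: l := rfl
    have hsucc : ∀ s, (j :: l).set (s+1) i = j :: l.set s i := fun s => rfl
    simp only [h0, hsucc, uList_cons]
    abel

lemma Wprod_perm {l l' : List (Fin m)} (h : l.Perm l') :
    (∀ i : Fin m, (Wprod i l : ExteriorAlgebra F (Fin m → F)) = Wprod i l')
      ∨ (∀ i : Fin m, (Wprod i l : ExteriorAlgebra F (Fin m → F)) = -Wprod i l') := by
  induction h with
  | nil => exact Or.inl fun i => rfl
  | cons x h ih =>
    rcases ih with ih | ih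
    · exact Or.inl fun i => by rw [Wprod_cons, Wprod_cons, ih]
    · exact Or.inr fun i => by rw [Wprod_cons, Wprod_cons, ih, mul_neg]
  | swap x y t =>
    refine Or.inr fun i => ?_
    have : (Wfac i y * Wfac i x : ExteriorAlgebra F (Fin m → F)) = -(Wfac i x * Wfac i y) := by
      rw [Wfac_eq_iota i y, Wfac_eq_iota i x]
      exact iota_anticomm _ _
    rw [Wprod_cons, Wprod_cons, Wprod_cons, Wprod_cons, ← mul_assoc, ← mul_assoc, this,
      neg_mul]
  | trans h1 h2 ih1 ih2 =>
    rcases ih1 with ih1 | ih1 <;> rcases ih2 with ih2 | ih2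
    · exact Or.inl fun i => (ih1 i).trans (ih2 i)
    · exact Or.inr fun i => (ih1 i).trans (ih2 i)
    · exact Or.inr fun i => (ih1 i).trans (congrArg Neg.neg (ih2 i))
    · exact Or.inl fun i => by rw [ih1 i, ih2 i, neg_neg]

def GenP (b : Fin m → F) (l : List (Fin m)) : XiAlg F m :=
  ∑ i ∈ lsupp b \ l.toFinset,
    (C (b i) * tMon (lsupp b \ insert i l.toFinset)) ⊗ₜ[F] Wprod i l

def Dterm (b : Fin m → F) (l : List (Fin m)) : XiAlg F m :=
  ∑ i ∈ lsupp b \ l.toFinset,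
    (C (b i) * tMon (lsupp b \ insert i l.toFinset)) ⊗ₜ[F] (uGen i * uList l)

lemma genP_eq_PLS (b : Fin m → F) (T : Finset (Fin m)) :
    GenP b (T.sort (· ≤ ·)) = PLS b T := by
  unfold GenP PLS
  rw [Finset.sort_toFinset]
  refine Finset.sum_congr rfl fun i hi => ?_
  congr 1
  rw [Wprod_eq]
  rfl

lemma genP_perm {b : Fin m → F} {l l' : List (Fin m)} (h : l.Perm l') :
    GenP b l = GenP b l' ∨ GenP b l = -GenP b l' := by
  have hT : l.toFinset = l'.toFinset := List.toFinset_eq_of_perm _ _ h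
  rcases Wprod_perm (F := F) h with hw | hw
  · left
    unfold GenP
    rw [hT]
    exact Finset.sum_congr rfl fun i _ => by rw [hw i]
  · right
    unfold GenP
    rw [hT, ← Finset.sum_neg_distrib]
    exact Finset.sum_congr rfl fun i _ => by rw [hw i, TensorProduct.tmul_neg]

lemma key1 {b : Fin m → F} {j : Fin m} (hj : j ∉ lsupp b) (l : List (Fin m)) :
    GenP b (j :: l) = (1 ⊗ₜ[F] uGen j) * GenP b l - Dterm b l := by
  have hidx : lsupp b \ (j :: l).toFinset = lsupp b \ l.toFinset := by
    ext x
    simp only [List.toFinset_cons, Finset.mem_sdiff, Finset.mem_insert]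
    constructor
    · rintro ⟨h1, h2⟩; exact ⟨h1, fun h => h2 (Or.inr h)⟩
    · rintro ⟨h1, h2⟩
      refine ⟨h1, ?_⟩
      rintro (rfl | h)
      exacts [hj h1, h2 h]
  have hmon : ∀ i : Fin m, lsupp b \ insert i (j :: l).toFinset
      = lsupp b \ insert i l.toFinset := by
    intro i
    ext x
    simp only [List.toFinset_cons, Finset.mem_sdiff, Finset.mem_insert]
    constructor
    · rintro ⟨h1, h2⟩
      exact ⟨h1, fun h => h2 (h.elim Or.inl (fun h' => Or.inr (Or.inr h')))⟩
    · rintro ⟨h1, h2⟩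
      refine ⟨h1, ?_⟩
      rintro (rfl | rfl | h)
      exacts [h2 (Or.inl rfl), hj h1, h2 (Or.inr h)]
  unfold GenP Dterm
  rw [hidx, Finset.mul_sum, ← Finset.sum_sub_distrib]
  refine Finset.sum_congr rfl fun i hi => ?_
  rw [hmon i, Algebra.TensorProduct.tmul_mul_tmul, one_mul, Wprod_cons, Wfac, sub_mul,
    uGen_mul_Wprod_self, TensorProduct.tmul_sub]

lemma key2 {b : Fin m → F} {j₀ : Fin m} (l : List (Fin m))
    (hj₀ : j₀ ∈ lsupp b \ l.toFinset) :
    Dterm b l = (1 ⊗ₜ[F] uGen j₀) * GenP b l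
      - ((-1 : F) ^ l.length) • ((X j₀ ⊗ₜ[F] (1 : ExtAlg F m)) * GenP b (l ++ [j₀])) := by
  have hsq : ((-1 : F) ^ l.length) * ((-1 : F) ^ l.length) = 1 := by
    rw [← mul_pow]; norm_num
  -- step 1: (1 ⊗ u_{j₀}) * GenP b l
  have hA : (1 ⊗ₜ[F] uGen j₀) * GenP b l
      = ((-1 : F) ^ l.length) • (∑ i ∈ lsupp b \ l.toFinset,
          (C (b i) * tMon (lsupp b \ insert i l.toFinset)) ⊗ₜ[F] Wprod i (l ++ [j₀]))
        + Dterm b l := by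
    unfold GenP Dterm
    rw [Finset.mul_sum, Finset.smul_sum, ← Finset.sum_add_distrib]
    refine Finset.sum_congr rfl fun i hi => ?_
    rw [Algebra.TensorProduct.tmul_mul_tmul, one_mul, ← TensorProduct.tmul_smul,
      ← TensorProduct.tmul_add]
    congr 1
    have h1 : (Wprod i l * uGen j₀ : ExtAlg F m)
        = Wprod i (l ++ [j₀]) + uList l * uGen i := by
      rw [Wprod_append]
      have : (Wprod i [j₀] : ExtAlg F m) = uGen j₀ - uGen i := by
        simp [Wfac]
      rw [this, mul_sub, Wprod_mul_uGen_self]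
      abel
    have h2 : (uList l * uGen i : ExtAlg F m)
        = ((-1 : F) ^ l.length) • (uGen i * uList l) := by
      rw [uGen_mul_uList, smul_smul, hsq, one_smul]
    rw [uGen_mul_Wprod, h1, h2, smul_add, smul_smul, hsq, one_smul]
  -- step 2: the middle sum equals (X j₀ ⊗ 1) * GenP b (l ++ [j₀])
  have hB : (∑ i ∈ lsupp b \ l.toFinset,
        (C (b i) * tMon (lsupp b \ insert i l.toFinset)) ⊗ₜ[F] Wprod i (l ++ [j₀]))
      = (X j₀ ⊗ₜ[F] (1 : ExtAlg F m)) * GenP b (l ++ [j₀]) := by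
    have hT' : (l ++ [j₀]).toFinset = insert j₀ l.toFinset := by
      ext x
      simp only [List.toFinset_append, List.toFinset_cons, List.toFinset_nil,
        Finset.mem_union, Finset.mem_insert, Finset.mem_singleton, Finset.notMem_empty,
        or_false]
      tauto
    have hidx' : lsupp b \ (l ++ [j₀]).toFinset = (lsupp b \ l.toFinset).erase j₀ := by
      rw [hT']
      ext x
      simp only [Finset.mem_sdiff, Finset.mem_insert, Finset.mem_erase]
      tauto
    have hzero : (C (b j₀) * tMon (lsupp b \ insert j₀ l.toFinset))
        ⊗ₜ[F] (Wprod j₀ (l ++ [j₀]) : ExtAlg F m) = 0 := by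
      rw [Wprod_append]
      have : (Wprod j₀ [j₀] : ExtAlg F m) = 0 := by simp [Wfac_self]
      rw [this, mul_zero, TensorProduct.tmul_zero]
    rw [← Finset.sum_erase (lsupp b \ l.toFinset)
      (f := fun i => (C (b i) * tMon (lsupp b \ insert i l.toFinset))
        ⊗ₜ[F] (Wprod i (l ++ [j₀]) : ExtAlg F m)) (a := j₀) hzero]
    unfold GenP
    rw [hidx', Finset.mul_sum]
    refine Finset.sum_congr rfl fun i hi => ?_
    rw [Algebra.TensorProduct.tmul_mul_tmul, one_mul]
    congr 1
    have hij : j₀ ≠ i := (Finset.mem_erase.mp hi).1.symm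
    have hj₀mem : j₀ ∈ lsupp b \ insert i l.toFinset := by
      have hj₀' := hj₀
      simp only [Finset.mem_sdiff, Finset.mem_insert] at *
      exact ⟨hj₀'.1, fun h => h.elim hij hj₀'.2⟩
    have herase : (lsupp b \ insert i l.toFinset).erase j₀
        = lsupp b \ insert i (insert j₀ l.toFinset) := by
      ext x
      simp only [Finset.mem_erase, Finset.mem_sdiff, Finset.mem_insert]
      tauto
    rw [hT']
    unfold tMon
    rw [← Finset.mul_prod_erase _ _ hj₀mem, herase]
    ring
  rw [hA, hB, add_sub_cancel_left]

lemma mem_lsupp {b : Fin m → F} {i : Fin m} : i ∈ lsupp b ↔ b i ≠ 0 := by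
  simp [lsupp, Finset.mem_filter]

lemma genP_mem_base (b : Fin m → F) (l : List (Fin m)) (hnd : l.Nodup)
    (hsub : ∀ x ∈ l, x ∈ lsupp b) :
    GenP b l ∈ Ideal.span {ξ : XiAlg F m | ∃ T, T ⊆ lsupp b ∧ ξ = PLS b T} := by
  have hperm : l.Perm (l.toFinset.sort (· ≤ ·)) :=
    List.perm_of_nodup_nodup_toFinset_eq hnd (Finset.sort_nodup _ _)
      (by rw [Finset.sort_toFinset])
  have hmem : PLS b l.toFinset ∈
      Ideal.span {ξ : XiAlg F m | ∃ T, T ⊆ lsupp b ∧ ξ = PLS b T} :=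
    Ideal.subset_span ⟨l.toFinset, fun x hx => hsub x (List.mem_toFinset.mp hx), rfl⟩
  rcases genP_perm (b := b) hperm with h | h
  · rw [h, genP_eq_PLS]; exact hmem
  · rw [h, genP_eq_PLS]; exact neg_mem hmem

lemma genP_mem (b : Fin m → F) (k : ℕ) :
    ∀ l : List (Fin m), l.Nodup → (l.toFinset \ lsupp b).card ≤ k →
      GenP b l ∈ Ideal.span {ξ : XiAlg F m | ∃ T, T ⊆ lsupp b ∧ ξ = PLS b T} := by
  induction k with
  | zero =>
    intro l hnd hcard
    apply genP_mem_base b l hnd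
    intro x hx
    by_contra hxb
    have hmem : x ∈ l.toFinset \ lsupp b :=
      Finset.mem_sdiff.mpr ⟨List.mem_toFinset.mpr hx, hxb⟩
    have := Finset.card_pos.mpr ⟨x, hmem⟩
    omega
  | succ k ih =>
    intro l hnd hcard
    by_cases hall : ∀ x ∈ l, x ∈ lsupp b
    · exact genP_mem_base b l hnd hall
    push_neg at hall
    obtain ⟨j, hjl, hjb⟩ := hall
    have hperm : l.Perm (j :: l.erase j) := List.perm_cons_erase hjl
    set l₀ := l.erase j with hl₀
    have hnd' : (j :: l₀).Nodup := hperm.nodup hnd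
    have hjnot : j ∉ l₀ := (List.nodup_cons.mp hnd').1
    have hndl₀ : l₀.Nodup := (List.nodup_cons.mp hnd').2
    have hTl : l.toFinset = insert j l₀.toFinset := by
      rw [List.toFinset_eq_of_perm _ _ hperm, List.toFinset_cons]
    have hcard₀ : (l₀.toFinset \ lsupp b).card ≤ k := by
      have hsd : l.toFinset \ lsupp b = insert j (l₀.toFinset \ lsupp b) := by
        rw [hTl]
        ext x
        simp only [Finset.mem_sdiff, Finset.mem_insert]
        constructor
        · rintro ⟨rfl | h, hb⟩
          exacts [Or.inl rfl, Or.inr ⟨h, hb⟩]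
        · rintro (rfl | ⟨h, hb⟩)
          exacts [⟨Or.inl rfl, hjb⟩, ⟨Or.inr h, hb⟩]
      have hjmem : j ∉ l₀.toFinset \ lsupp b := fun h =>
        hjnot (List.mem_toFinset.mp (Finset.mem_sdiff.mp h).1)
      rw [hsd, Finset.card_insert_of_notMem hjmem] at hcard
      omega
    have hmem₀ : GenP b l₀ ∈ Ideal.span {ξ : XiAlg F m | ∃ T, T ⊆ lsupp b ∧ ξ = PLS b T} :=
      ih l₀ hndl₀ hcard₀
    have hD : Dterm b l₀ ∈ Ideal.span {ξ : XiAlg F m | ∃ T, T ⊆ lsupp b ∧ ξ = PLS b T} := by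
      rcases (lsupp b \ l₀.toFinset).eq_empty_or_nonempty with he | ⟨j₀, hj₀⟩
      · have hz : Dterm b l₀ = 0 := by unfold Dterm; rw [he, Finset.sum_empty]
        rw [hz]; exact zero_mem _
      · rw [key2 l₀ hj₀]
        refine sub_mem (Ideal.mul_mem_left _ _ hmem₀) ?_
        refine Submodule.smul_of_tower_mem _ _ ?_
        have hj₀B : j₀ ∈ lsupp b := (Finset.mem_sdiff.mp hj₀).1
        have hj₀l : j₀ ∉ l₀ := fun h =>
          (Finset.mem_sdiff.mp hj₀).2 (List.mem_toFinset.mpr h)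
        have hnodup : (l₀ ++ [j₀]).Nodup :=
          List.Nodup.append hndl₀ (List.nodup_singleton j₀)
            (fun x hx hx' => hj₀l ((List.mem_singleton.mp hx') ▸ hx))
        have hcard' : ((l₀ ++ [j₀]).toFinset \ lsupp b).card ≤ k := by
          have hsd : (l₀ ++ [j₀]).toFinset \ lsupp b = l₀.toFinset \ lsupp b := by
            ext x
            simp only [List.toFinset_append, List.toFinset_cons, List.toFinset_nil,
              Finset.mem_union, Finset.mem_sdiff, Finset.mem_insert,
              Finset.mem_singleton, Finset.notMem_empty, or_false]
            constructor
            · rintro ⟨h | rfl, hb⟩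
              exacts [⟨h, hb⟩, absurd hj₀B hb]
            · rintro ⟨h, hb⟩
              exact ⟨Or.inl h, hb⟩
          rw [hsd]; exact hcard₀
        exact Ideal.mul_mem_left _ _ (ih _ hnodup hcard')
    have hmemcons : GenP b (j :: l₀) ∈
        Ideal.span {ξ : XiAlg F m | ∃ T, T ⊆ lsupp b ∧ ξ = PLS b T} := by
      rw [key1 hjb l₀]
      exact sub_mem (Ideal.mul_mem_left _ _ hmem₀) hD
    rcases genP_perm (b := b) hperm with h | h
    · rw [h]; exact hmemcons
    · rw [h]; exact neg_mem hmemcons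

lemma genP_sort_eq (b : Fin m → F) (S : Finset (Fin m)) :
    GenP b (S.sort (· ≤ ·)) = ∑ i ∈ lsupp b \ S,
      (C (b i) * tMon (lsupp b \ insert i S)) ⊗ₜ[F] Wprod i (S.sort (· ≤ ·)) := by
  unfold GenP
  rw [Finset.sort_toFinset]

lemma sum_repr (a b : Fin m → F) (hsub : lsupp b ⊆ lsupp a) (S : Finset (Fin m)) :
    (tMon (lsupp a \ (lsupp b ∪ S)) ⊗ₜ[F] (1 : ExtAlg F m)) * GenP b (S.sort (· ≤ ·))
      = ∑ i ∈ lsupp a \ S,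
          (C (b i) * tMon (lsupp a \ insert i S)) ⊗ₜ[F] Wprod i (S.sort (· ≤ ·)) := by
  rw [genP_sort_eq, Finset.mul_sum]
  rw [← Finset.sum_subset (s₁ := lsupp b \ S) (Finset.sdiff_subset_sdiff hsub le_rfl)
    (fun i hi hni => ?_)]
  · refine Finset.sum_congr rfl fun i hi => ?_
    rw [Algebra.TensorProduct.tmul_mul_tmul, one_mul]
    congr 1
    have hiB : i ∈ lsupp b := (Finset.mem_sdiff.mp hi).1
    have hiS : i ∉ S := (Finset.mem_sdiff.mp hi).2
    have hdisj : Disjoint (lsupp a \ (lsupp b ∪ S)) (lsupp b \ insert i S) := by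
      rw [Finset.disjoint_left]
      intro x hx hx'
      exact (Finset.mem_sdiff.mp hx).2
        (Finset.mem_union_left _ (Finset.mem_sdiff.mp hx').1)
    have hun : (lsupp a \ (lsupp b ∪ S)) ∪ (lsupp b \ insert i S)
        = lsupp a \ insert i S := by
      ext x
      simp only [Finset.mem_union, Finset.mem_sdiff, Finset.mem_insert]
      constructor
      · rintro (⟨h1, h2⟩ | ⟨h1, h2⟩)
        · refine ⟨h1, ?_⟩
          rintro (rfl | hx)
          exacts [h2 (Or.inl hiB), h2 (Or.inr hx)]
        · exact ⟨hsub h1, h2⟩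
      · rintro ⟨h1, h2⟩
        by_cases hb : x ∈ lsupp b
        · exact Or.inr ⟨hb, h2⟩
        · exact Or.inl ⟨h1, fun h => h.elim hb (fun hx => h2 (Or.inr hx))⟩
    rw [mul_left_comm, tMon, tMon, tMon, ← Finset.prod_union hdisj, hun]
  · have hib : i ∉ lsupp b := fun h =>
      hni (Finset.mem_sdiff.mpr ⟨h, (Finset.mem_sdiff.mp hi).2⟩)
    have hb0 : b i = 0 := by
      by_contra h
      exact hib (mem_lsupp.mpr h)
    rw [hb0, map_zero, zero_mul, TensorProduct.zero_tmul]

end St13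

/-- If `L = L₁ + L₂` with `|L₁| ⊊ |L|` and `|L₂| ⊊ |L|`, then for every
`S ⊆ |L|` the element `P_{L,S}` lies in the ideal generated by the `P_{L₁,T}` (`T ⊆ |L₁|`)
together with the `P_{L₂,T'}` (`T' ⊆ |L₂|`). -/
theorem statement13
    (F : Type) [Field F] (n m : ℕ) (hn : 0 < n) (hm : 0 < m)
    (c : Fin m → Fin n → F) (hc : ∀ i, c i ≠ 0)
    (a a₁ a₂ : Fin m → F)
    (ha : IsLinRel c a) (ha₁ : IsLinRel c a₁) (ha₂ : IsLinRel c a₂)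
    (hsum : a = a₁ + a₂)
    (h₁ : lsupp a₁ ⊂ lsupp a) (h₂ : lsupp a₂ ⊂ lsupp a)
    (S : Finset (Fin m)) (hS : S ⊆ lsupp a) :
    PLS a S ∈
      Ideal.span ({ξ : XiAlg F m | ∃ T : Finset (Fin m), T ⊆ lsupp a₁ ∧ ξ = PLS a₁ T} ∪
        {ξ : XiAlg F m | ∃ T' : Finset (Fin m), T' ⊆ lsupp a₂ ∧ ξ = PLS a₂ T'}) := by
  classical
  have hsub1 : lsupp a₁ ⊆ lsupp a := h₁.subset
  have hsub2 : lsupp a₂ ⊆ lsupp a := h₂.subset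
  have hdec : PLS a S =
      (tMon (lsupp a \ (lsupp a₁ ∪ S)) ⊗ₜ[F] (1 : ExtAlg F m)) * St13.GenP a₁ (S.sort (· ≤ ·))
      + (tMon (lsupp a \ (lsupp a₂ ∪ S)) ⊗ₜ[F] (1 : ExtAlg F m)) * St13.GenP a₂ (S.sort (· ≤ ·)) := by
    rw [St13.sum_repr a a₁ hsub1 S, St13.sum_repr a a₂ hsub2 S,
      ← St13.genP_eq_PLS a S, St13.genP_sort_eq, ← Finset.sum_add_distrib]
    refine Finset.sum_congr rfl fun i hi => ?_
    have hai : a i = a₁ i + a₂ i := by rw [hsum]; rfl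
    rw [hai, map_add, add_mul, TensorProduct.add_tmul]
  rw [hdec]
  refine Ideal.add_mem _ ?_ ?_
  · refine Ideal.mul_mem_left _ _ ?_
    exact Ideal.span_mono Set.subset_union_left
      (St13.genP_mem a₁ (((S.sort (· ≤ ·)).toFinset \ lsupp a₁).card) (S.sort (· ≤ ·))
        (Finset.sort_nodup _ _) le_rfl)
  · refine Ideal.mul_mem_left _ _ ?_
    exact Ideal.span_mono Set.subset_union_right
      (St13.genP_mem a₂ (((S.sort (· ≤ ·)).toFinset \ lsupp a₂).card) (S.sort (· ≤ ·))
        (Finset.sort_nodup _ _) le_rfl)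
end
end

section
/- The kernel of h equals the ideal of F_2[t_α : α ∈ F_2^n∖{0}] generated by the polynomials t_α t_β + t_α t_γ + t_β t_γ, where (α, β, γ) ranges over all triples of pairwise distinct nonzero elements of F_2^n with α + β + γ = 0. Consequently, the subring of R generated by the elements z_α^{-1} is isomorphic to F_2[t_α : α ∈ F_2^n∖{0}]/(t_α t_β + t_α t_γ + t_β t_γ : α + β + γ = 0). -/
open MvPolynomial Finset

noncomputable section

/-- linear form for arbitrary vector -/
def zlin {n : ℕ} (v : Fin n → ZMod 2) : MvPolynomial (Fin n) (ZMod 2) :=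
  ∑ j, C (v j) * X j

lemma zlin_coeff {n : ℕ} (v : Fin n → ZMod 2) (j0 : Fin n) :
    MvPolynomial.coeff (Finsupp.single j0 1) (zlin v) = v j0 := by
  classical
  rw [zlin, MvPolynomial.coeff_sum]
  have h : ∀ j : Fin n, MvPolynomial.coeff (Finsupp.single j0 1) (C (v j) * X j)
      = if j = j0 then v j else 0 := by
    intro j
    rw [MvPolynomial.C_mul', MvPolynomial.coeff_smul, MvPolynomial.coeff_X']
    by_cases h : j = j0 <;> simp [h, Finsupp.single_left_inj (one_ne_zero (α := ℕ))]
  simp [h]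

lemma zlin_eq_zero_iff {n : ℕ} (v : Fin n → ZMod 2) : zlin v = 0 ↔ v = 0 := by
  constructor
  · intro h
    funext j
    have := zlin_coeff v j
    rw [h] at this
    simpa using this.symm
  · intro h; subst h; simp [zlin]

lemma zlin_add {n : ℕ} (v w : Fin n → ZMod 2) : zlin (v + w) = zlin v + zlin w := by
  simp [zlin, add_mul, Finset.sum_add_distrib]

lemma zlin_inj {n : ℕ} : Function.Injective (zlin (n := n)) := by
  intro v w h
  funext j
  have h1 := zlin_coeff v j
  have h2 := zlin_coeff w j
  rw [h] at h1; rw [h1] at h2; exact h2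

/-- index of the first nonzero coordinate, as a natural number -/
def leadN {n : ℕ} (v : Fin n → ZMod 2) : ℕ :=
  sInf {j : ℕ | ∃ h : j < n, v ⟨j, h⟩ ≠ 0}

lemma leadN_spec {n : ℕ} {v : Fin n → ZMod 2} (hv : v ≠ 0) :
    ∃ h : leadN v < n, v ⟨leadN v, h⟩ ≠ 0 := by
  have hne : {j : ℕ | ∃ h : j < n, v ⟨j, h⟩ ≠ 0}.Nonempty := by
    by_contra h
    apply hv
    funext j
    by_contra hj
    exact h ⟨j.1, j.2, by simpa using hj⟩
  exact Nat.sInf_mem hne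

lemma leadN_min {n : ℕ} (v : Fin n → ZMod 2) {j : ℕ} (hj : j < leadN v) (h : j < n) :
    v ⟨j, h⟩ = 0 := by
  by_contra hne
  exact absurd (Nat.sInf_le (show ∃ h : j < n, v ⟨j, h⟩ ≠ 0 from ⟨h, hne⟩)) (not_le.mpr hj)

lemma leadN_cons_one {n : ℕ} (l : Fin n → ZMod 2) : leadN (Fin.cons (α := fun _ => ZMod 2) 1 l) = 0 := by
  rw [leadN, Nat.sInf_eq_zero]
  left
  exact ⟨Nat.succ_pos n, by simp⟩

lemma cons_zero_ne_zero {n : ℕ} (l : Fin n → ZMod 2) : Fin.cons (α := fun _ => ZMod 2) 1 l ≠ 0 := by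
  intro h
  have : (Fin.cons (α := fun _ => ZMod 2) 1 l) 0 = 0 := by rw [h]; rfl
  simpa using this

lemma leadN_cons_succ {n : ℕ} (w : Fin n → ZMod 2) (hw : w ≠ 0) :
    leadN (Fin.cons (α := fun _ => ZMod 2) (0 : ZMod 2) w) = leadN w + 1 := by
  obtain ⟨hlt, hne⟩ := leadN_spec hw
  apply le_antisymm
  · apply Nat.sInf_le
    refine ⟨Nat.succ_lt_succ hlt, ?_⟩
    have : (⟨leadN w + 1, Nat.succ_lt_succ hlt⟩ : Fin (n+1)) = Fin.succ ⟨leadN w, hlt⟩ := rfl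
    rw [this, Fin.cons_succ]
    exact hne
  · -- every element of the set is ≥ leadN w + 1
    have hcons : Fin.cons (α := fun _ => ZMod 2) (0 : ZMod 2) w ≠ 0 := by
      intro h
      apply hw
      funext j
      have : (Fin.cons (α := fun _ => ZMod 2) (0 : ZMod 2) w) j.succ = 0 := by rw [h]; rfl
      simpa using this
    obtain ⟨hlt2, hne2⟩ := leadN_spec hcons
    -- show leadN w + 1 ≤ leadN (cons 0 w), i.e. every member ≥
    apply Nat.add_one_le_iff.mpr
    rcases Nat.eq_zero_or_pos (leadN (Fin.cons 0 w)) with h0 | hpos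
    · exfalso
      apply hne2
      have h00 : (⟨leadN (Fin.cons (α := fun _ => ZMod 2) (0 : ZMod 2) w), hlt2⟩ : Fin (n+1)) = 0 := by
        ext; simpa using h0
      rw [h00]
      simp
    · -- leadN (cons 0 w) = k+1 and w_k ≠ 0 at position (leadN cons) - 1 ... show leadN w < leadN cons
      by_contra hcon
      push_neg at hcon
      -- hcon : leadN (cons 0 w) ≤ leadN w
      -- then position leadN(cons 0 w) - 1 < leadN w, so w there = 0, contradiction with hne2
      set k := leadN (Fin.cons 0 w) with hk
      have hk1 : k - 1 < leadN w := by omega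
      have hwk : w ⟨k - 1, by omega⟩ = 0 := leadN_min w hk1 (by omega)
      apply hne2
      have : (⟨k, hlt2⟩ : Fin (n+1)) = Fin.succ ⟨k - 1, by omega⟩ := by
        ext; simp; omega
      rw [this, Fin.cons_succ]
      exact hwk

/-- weight of a vector -/
def valN {n : ℕ} (v : Fin n → ZMod 2) : ℕ :=
  ∑ j : Fin n, (v j).val * 2 ^ (n - 1 - j.1)

lemma sum_two_pow_lt (k : ℕ) : ∑ i ∈ Finset.range k, 2 ^ i < 2 ^ k := by
  induction k with
  | zero => simp
  | succ k ih =>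
    rw [Finset.sum_range_succ, pow_succ]
    omega

lemma valN_lt {n : ℕ} {v w : Fin n → ZMod 2} {L : ℕ} (hL : L < n)
    (hv : ∀ j : Fin n, j.1 ≤ L → v j = 0) (hw : w ⟨L, hL⟩ ≠ 0) : valN v < valN w := by
  have hwval : 2 ^ (n - 1 - L) ≤ valN w := by
    have : (w ⟨L, hL⟩).val = 1 := by
      have := (w ⟨L, hL⟩).val_lt
      interval_cases h : (w ⟨L, hL⟩).val
      · exact (hw ((ZMod.val_eq_zero _).mp h)).elim
      · rfl
    calc 2 ^ (n - 1 - L) = (w ⟨L, hL⟩).val * 2 ^ (n - 1 - (⟨L, hL⟩ : Fin n).1) := by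
          rw [this]; ring
      _ ≤ valN w := Finset.single_le_sum (f := fun j => (w j).val * 2 ^ (n - 1 - j.1))
          (fun _ _ => Nat.zero_le _) (Finset.mem_univ _)
  have hvval : valN v < 2 ^ (n - 1 - L) := by
    have h1 : valN v ≤ ∑ j ∈ Finset.univ.filter (fun j : Fin n => L < j.1), 2 ^ (n - 1 - j.1) := by
      rw [valN]
      rw [← Finset.sum_filter_add_sum_filter_not Finset.univ (fun j : Fin n => L < j.1)]
      have hz : ∑ j ∈ Finset.univ.filter (fun j : Fin n => ¬ L < j.1),
          (v j).val * 2 ^ (n - 1 - j.1) = 0 := by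
        apply Finset.sum_eq_zero
        intro j hj
        simp only [Finset.mem_filter] at hj
        rw [hv j (by omega), ZMod.val_zero, zero_mul]
      rw [hz, add_zero]
      apply Finset.sum_le_sum
      intro j _
      have : (v j).val ≤ 1 := by have := (v j).val_lt; omega
      nlinarith [pow_pos (by norm_num : (0:ℕ) < 2) (n - 1 - j.1)]
    have h2 : ∑ j ∈ Finset.univ.filter (fun j : Fin n => L < j.1), 2 ^ (n - 1 - j.1)
        ≤ ∑ i ∈ Finset.range (n - 1 - L), 2 ^ i := by
      have hinj : Set.InjOn (fun j : Fin n => n - 1 - j.1)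
          (Finset.univ.filter (fun j : Fin n => L < j.1)) := by
        intro a ha b hb hab
        simp only [Finset.coe_filter, Set.mem_setOf_eq] at ha hb
        have ha2 := a.2; have hb2 := b.2
        simp only at hab
        ext
        omega
      rw [show (∑ j ∈ Finset.univ.filter (fun j : Fin n => L < j.1), 2 ^ (n - 1 - j.1))
          = ∑ i ∈ (Finset.univ.filter (fun j : Fin n => L < j.1)).image
              (fun j : Fin n => n - 1 - j.1), 2 ^ i from (Finset.sum_image hinj).symm]
      apply Finset.sum_le_sum_of_subset
      intro i hi
      simp only [Finset.mem_image, Finset.mem_filter] at hi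
      obtain ⟨j, ⟨_, hLj⟩, rfl⟩ := hi
      simp only [Finset.mem_range]
      have := j.2
      omega
    calc valN v ≤ _ := h1
      _ ≤ _ := h2
      _ < 2 ^ (n - 1 - L) := sum_two_pow_lt _
  omega

theorem PF {D : Type*} [CommRing D] [IsDomain D] {ι : Type*} [Fintype ι]
    (c : ι → D) (hc : Function.Injective c) :
    ∀ (N : ℕ) (Mt : ι → ℕ), (∑ i, Mt i) ≤ N → ∀ (T : Finset (ι → ℕ)) (b : (ι → ℕ) → D),
    (∀ τ ∈ T, (∀ i, τ i ≤ Mt i) ∧ (∀ i j, τ i ≠ 0 → τ j ≠ 0 → i = j)) →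
    (∑ τ ∈ T, Polynomial.C (b τ) *
      ∏ i, (Polynomial.X - Polynomial.C (c i)) ^ (Mt i - τ i) = 0) →
    ∀ τ ∈ T, b τ = 0 := by
  classical
  have base : ∀ (Mt : ι → ℕ), (∀ i, Mt i = 0) → ∀ (T : Finset (ι → ℕ)) (b : (ι → ℕ) → D),
      (∀ τ ∈ T, (∀ i, τ i ≤ Mt i) ∧ (∀ i j, τ i ≠ 0 → τ j ≠ 0 → i = j)) →
      (∑ τ ∈ T, Polynomial.C (b τ) *
        ∏ i, (Polynomial.X - Polynomial.C (c i)) ^ (Mt i - τ i) = 0) →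
      ∀ τ ∈ T, b τ = 0 := by
    intro Mt hMt T b hT hsum τ hτ
    have hτ0 : ∀ τ' ∈ T, τ' = τ := by
      intro τ' hτ'
      funext j
      have h1 := (hT τ' hτ').1 j
      have h2 := (hT τ hτ).1 j
      rw [hMt j] at h1 h2
      omega
    have hTsing : T = {τ} := by
      apply Finset.eq_singleton_iff_unique_mem.mpr
      exact ⟨hτ, hτ0⟩
    rw [hTsing, Finset.sum_singleton] at hsum
    have hexp : ∀ i, Mt i - τ i = 0 := fun i => by rw [hMt i]; omega
    simp only [hexp, pow_zero, Finset.prod_const_one, mul_one] at hsum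
    exact_mod_cast Polynomial.C_eq_zero.mp hsum
  intro N
  induction N with
  | zero =>
    intro Mt hMt T b hT hsum
    exact base Mt (fun i => by
      have := Finset.single_le_sum (f := Mt) (fun _ _ => Nat.zero_le _) (Finset.mem_univ i)
      omega) T b hT hsum
  | succ N ih =>
    intro Mt hMt T b hT hsum
    -- Step 1 : any τ₀ hitting the max at some i₀ has b τ₀ = 0
    have hstep1 : ∀ τ₀ ∈ T, ∀ i₀, Mt i₀ ≠ 0 → τ₀ i₀ = Mt i₀ → b τ₀ = 0 := by
      intro τ₀ hτ₀ i₀ hM0 hτi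
      have heval := congrArg (Polynomial.eval (c i₀)) hsum
      simp only [Polynomial.eval_finset_sum, Polynomial.eval_mul, Polynomial.eval_prod,
        Polynomial.eval_pow, Polynomial.eval_sub, Polynomial.eval_X, Polynomial.eval_C,
        Polynomial.eval_zero] at heval
      rw [Finset.sum_eq_single_of_mem τ₀ hτ₀ ?side] at heval
      · rcases mul_eq_zero.mp heval with h | h
        · exact h
        · exfalso
          refine (Finset.prod_ne_zero_iff.mpr (fun i _ => ?_)) h
          by_cases hii : i = i₀
          · subst hii; rw [hτi, Nat.sub_self, pow_zero]; exact one_ne_zero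
          · exact pow_ne_zero _ (sub_ne_zero.mpr (fun hcc => hii (hc hcc).symm))
      case side =>
        intro τ' hτ' hne
        have hlt : τ' i₀ < Mt i₀ := by
          rcases lt_or_eq_of_le ((hT τ' hτ').1 i₀) with h | h
          · exact h
          · exfalso
            apply hne
            funext j
            by_cases hj : j = i₀
            · subst hj; rw [h, hτi]
            · have h1 : τ' j = 0 := by
                by_contra hz
                exact hj ((hT τ' hτ').2 j i₀ hz (by rw [h]; exact hM0))
              have h2 : τ₀ j = 0 := by
                by_contra hz
                exact hj ((hT τ₀ hτ₀).2 j i₀ hz (by rw [hτi]; exact hM0))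
              rw [h1, h2]
        apply mul_eq_zero_of_right
        apply Finset.prod_eq_zero (Finset.mem_univ i₀)
        rw [sub_self]
        exact zero_pow (by omega)
    by_cases hM : ∀ i, Mt i = 0
    · exact base Mt hM T b hT hsum
    · push_neg at hM
      obtain ⟨i₁, hi₁⟩ := hM
      set Bad : (ι → ℕ) → Prop := fun τ => ∃ i, Mt i ≠ 0 ∧ τ i = Mt i with hBad
      have hbad : ∀ τ ∈ T, Bad τ → b τ = 0 := by
        rintro τ hτ ⟨i, hi, hτi⟩
        exact hstep1 τ hτ i hi hτi
      set T' := T.filter (fun τ => ¬ Bad τ) with hT'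
      have hsum' : ∑ τ ∈ T', Polynomial.C (b τ) *
          ∏ i, (Polynomial.X - Polynomial.C (c i)) ^ (Mt i - τ i) = 0 := by
        rw [← hsum]
        rw [← Finset.sum_filter_add_sum_filter_not T (fun τ => ¬ Bad τ)]
        have : ∑ τ ∈ T.filter (fun τ => ¬ ¬ Bad τ), Polynomial.C (b τ) *
            ∏ i, (Polynomial.X - Polynomial.C (c i)) ^ (Mt i - τ i) = 0 := by
          apply Finset.sum_eq_zero
          intro τ hτ
          simp only [Finset.mem_filter, not_not] at hτ
          rw [hbad τ hτ.1 hτ.2, map_zero, zero_mul]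
        rw [this, add_zero]
      set Mt' : ι → ℕ := fun i => Mt i - 1 with hMt'
      set s : ι → ℕ := fun i => Mt i - Mt' i with hs
      have hgood : ∀ τ ∈ T', ∀ i, Mt i ≠ 0 → τ i < Mt i := by
        intro τ hτ i hi
        simp only [hT', Finset.mem_filter, hBad, not_exists, not_and] at hτ
        have h1 := (hT τ hτ.1).1 i
        have h2 := hτ.2 i hi
        omega
      have key : ∀ τ ∈ T', ∏ i, (Polynomial.X - Polynomial.C (c i)) ^ (Mt i - τ i) =
          (∏ i, (Polynomial.X - Polynomial.C (c i)) ^ (s i)) *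
          ∏ i, (Polynomial.X - Polynomial.C (c i)) ^ (Mt' i - τ i) := by
        intro τ hτ
        rw [← Finset.prod_mul_distrib]
        apply Finset.prod_congr rfl
        intro i _
        rw [← pow_add]
        congr 1
        have h1 := (hT τ (Finset.mem_of_mem_filter τ hτ)).1 i
        by_cases hi : Mt i = 0
        · simp only [hs, hMt', hi]; omega
        · have := hgood τ hτ i hi
          simp only [hs, hMt']
          omega
      have hfact : (∏ i, (Polynomial.X - Polynomial.C (c i)) ^ (s i)) *
          (∑ τ ∈ T', Polynomial.C (b τ) *
            ∏ i, (Polynomial.X - Polynomial.C (c i)) ^ (Mt' i - τ i)) = 0 := by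
        rw [Finset.mul_sum, ← hsum']
        apply Finset.sum_congr rfl
        intro τ hτ
        rw [key τ hτ]
        ring
      have hne : (∏ i, (Polynomial.X - Polynomial.C (c i)) ^ (s i)) ≠ 0 := by
        apply Finset.prod_ne_zero_iff.mpr
        intro i _
        exact pow_ne_zero _ (Polynomial.X_sub_C_ne_zero (c i))
      have hsum'' := (mul_eq_zero.mp hfact).resolve_left hne
      have hmtle : ∑ i, Mt' i ≤ N := by
        have h1 : ∀ i, Mt i = Mt' i + s i := by
          intro i; simp only [hMt', hs]; omega
        have h2 : ∑ i, Mt i = ∑ i, Mt' i + ∑ i, s i := by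
          rw [← Finset.sum_add_distrib]
          exact Finset.sum_congr rfl (fun i _ => h1 i)
        have h3 : 1 ≤ ∑ i, s i := by
          have : s i₁ = 1 := by simp only [hs, hMt']; omega
          calc 1 = s i₁ := this.symm
            _ ≤ ∑ i, s i := Finset.single_le_sum (fun _ _ => Nat.zero_le _) (Finset.mem_univ i₁)
        omega
      have hres := ih Mt' hmtle T' b (fun τ hτ => ⟨fun i => by
          by_cases hi : Mt i = 0
          · have := (hT τ (Finset.mem_of_mem_filter τ hτ)).1 i
            simp only [hMt']; omega
          · have := hgood τ hτ i hi
            simp only [hMt']; omega,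
        (hT τ (Finset.mem_of_mem_filter τ hτ)).2⟩) hsum''
      intro τ hτ
      by_cases hb : Bad τ
      · exact hbad τ hτ hb
      · exact hres τ (Finset.mem_filter.mpr ⟨hτ, hb⟩)

/-- equivalence between pairs and vectors -/
def consE (n : ℕ) : (ZMod 2) × (Fin n → ZMod 2) ≃ (Fin (n+1) → ZMod 2) where
  toFun := fun p => Fin.cons p.1 p.2
  invFun := fun v => (v 0, Fin.tail v)
  left_inv := fun p => by simp
  right_inv := fun v => Fin.cons_self_tail v

lemma prod_zmod2 {M : Type*} [CommMonoid M] (g : ZMod 2 → M) : ∏ a : ZMod 2, g a = g 0 * g 1 := by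
  have h : (Finset.univ : Finset (ZMod 2)) = {0, 1} := by decide
  rw [h, Finset.prod_insert (by decide), Finset.prod_singleton]

lemma phi_zlin {n : ℕ} (v : Fin (n+1) → ZMod 2) :
    (finSuccEquiv (ZMod 2) n) (zlin v)
      = Polynomial.C (C (v 0)) * Polynomial.X + Polynomial.C (zlin (Fin.tail v)) := by
  rw [zlin, map_sum, Fin.sum_univ_succ]
  congr 1
  · rw [map_mul, finSuccEquiv_X_zero]
    congr 1
    simp [finSuccEquiv_apply]
  · rw [zlin, map_sum]
    apply Finset.sum_congr rfl
    intro j _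
    rw [map_mul, finSuccEquiv_X_succ,
      show (finSuccEquiv (ZMod 2) n) (C (v j.succ)) = Polynomial.C (C (v j.succ)) from by
        simp [finSuccEquiv_apply], ← map_mul]
    rfl

lemma cons_zero_zero {n : ℕ} : (Fin.cons (α := fun _ => ZMod 2) (0 : ZMod 2) (0 : Fin n → ZMod 2))
    = (0 : Fin (n+1) → ZMod 2) := by
  funext i
  refine Fin.cases ?_ ?_ i <;> simp

lemma cons_zero_eq_zero_iff {n : ℕ} {w : Fin n → ZMod 2} :
    Fin.cons (α := fun _ => ZMod 2) (0 : ZMod 2) w = 0 ↔ w = 0 := by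
  constructor
  · intro h
    funext i
    have : (Fin.cons (α := fun _ => ZMod 2) (0 : ZMod 2) w) i.succ = 0 := by rw [h]; rfl
    simpa using this
  · intro h; subst h; exact cons_zero_zero

/-- normality of an exponent function -/
def IsNormal {n : ℕ} (e : (Fin n → ZMod 2) → ℕ) : Prop :=
  ∀ v w, v ≠ 0 → w ≠ 0 → e v ≠ 0 → e w ≠ 0 → leadN v = leadN w → v = w

theorem IND : ∀ (n : ℕ) (S : Finset ((Fin n → ZMod 2) → ℕ)) (M : (Fin n → ZMod 2) → ℕ),
    M 0 = 0 → (∀ e ∈ S, e 0 = 0) → (∀ e ∈ S, IsNormal e) → (∀ e ∈ S, ∀ v, e v ≤ M v) →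
    (∑ e ∈ S, ∏ v : Fin n → ZMod 2, zlin v ^ (M v - e v) = 0) → S = ∅ := by
  intro n
  induction n with
  | zero =>
    intro S M hM0 hS0 _ _ hsum
    by_contra hS
    obtain ⟨e, he⟩ := Finset.nonempty_iff_ne_empty.mpr hS
    have hv0 : ∀ v : Fin 0 → ZMod 2, v = 0 := fun v => funext (fun i => i.elim0)
    have hall : ∀ e' ∈ S, e' = e := by
      intro e' he'
      funext v
      rw [hv0 v, hS0 e' he', hS0 e he]
    have hsing : S = {e} := Finset.eq_singleton_iff_unique_mem.mpr ⟨he, hall⟩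
    rw [hsing, Finset.sum_singleton] at hsum
    have hone : ∏ v : Fin 0 → ZMod 2, zlin v ^ (M v - e v) = 1 := by
      apply Finset.prod_eq_one
      intro v _
      rw [hv0 v, hM0, hS0 e he, pow_zero]
    rw [hone] at hsum
    exact one_ne_zero hsum
  | succ n ih =>
    intro S M hM0 hS0 hnorm hle hsum
    classical
    set φ := finSuccEquiv (ZMod 2) n with hφdef
    set τ : ((Fin (n+1) → ZMod 2) → ℕ) → (Fin n → ZMod 2) → ℕ :=
      fun e l => e (Fin.cons 1 l) with hτdef
    set e0 : ((Fin (n+1) → ZMod 2) → ℕ) → (Fin n → ZMod 2) → ℕ :=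
      fun e w => e (Fin.cons 0 w) with he0def
    set M1 : (Fin n → ZMod 2) → ℕ := fun l => M (Fin.cons 1 l) with hM1def
    set M0 : (Fin n → ZMod 2) → ℕ := fun w => M (Fin.cons 0 w) with hM0def
    set B : ((Fin (n+1) → ZMod 2) → ℕ) → MvPolynomial (Fin n) (ZMod 2) :=
      fun e => ∏ w, zlin w ^ (M0 w - e0 e w) with hBdef
    have key1 : ∀ e, φ (∏ v, zlin v ^ (M v - e v)) =
        Polynomial.C (B e) *
          ∏ l, (Polynomial.X - Polynomial.C (zlin l)) ^ (M1 l - τ e l) := by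
      intro e
      rw [map_prod]
      simp only [map_pow]
      rw [← Equiv.prod_comp (consE n) (fun v => φ (zlin v) ^ (M v - e v))]
      rw [Fintype.prod_prod_type]
      rw [prod_zmod2 (g := fun a => ∏ l, φ (zlin ((consE n) (a, l))) ^
        (M ((consE n) (a, l)) - e ((consE n) (a, l))))]
      have hE : ∀ a (l : Fin n → ZMod 2), (consE n) (a, l) = Fin.cons a l := fun _ _ => rfl
      congr 1
      · have hterm : ∀ l : Fin n → ZMod 2,
            φ (zlin ((consE n) (0, l))) ^ (M ((consE n) (0, l)) - e ((consE n) (0, l)))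
              = Polynomial.C (zlin l ^ (M0 l - e0 e l)) := by
          intro l
          rw [hE, phi_zlin]
          simp only [Fin.cons_zero, Fin.tail_cons, map_zero, zero_mul, zero_add, ← map_pow]
          rfl
        rw [Finset.prod_congr rfl (fun l _ => hterm l), ← map_prod]
      · apply Finset.prod_congr rfl
        intro l _
        rw [hE, phi_zlin]
        simp only [Fin.cons_zero, Fin.tail_cons, map_one, one_mul]
        rw [CharTwo.sub_eq_add]
    have hφsum : ∑ e ∈ S, Polynomial.C (B e) *
        ∏ l, (Polynomial.X - Polynomial.C (zlin l)) ^ (M1 l - τ e l) = 0 := by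
      have h0 := congrArg φ hsum
      rw [map_sum, map_zero] at h0
      rw [← h0]
      exact Finset.sum_congr rfl (fun e _ => (key1 e).symm)
    set T := S.image τ with hTdef
    set b : ((Fin n → ZMod 2) → ℕ) → MvPolynomial (Fin n) (ZMod 2) :=
      fun t => ∑ e ∈ S.filter (fun e => τ e = t), B e with hbdef
    have hsum2 : ∑ t ∈ T, Polynomial.C (b t) *
        ∏ l, (Polynomial.X - Polynomial.C (zlin l)) ^ (M1 l - t l) = 0 := by
      rw [← hφsum]
      rw [← Finset.sum_fiberwise_of_maps_to (g := τ)
        (fun e he => Finset.mem_image_of_mem τ he)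
        (fun e => Polynomial.C (B e) *
          ∏ l, (Polynomial.X - Polynomial.C (zlin l)) ^ (M1 l - τ e l))]
      apply Finset.sum_congr rfl
      intro t _
      simp only [hbdef]
      rw [map_sum, Finset.sum_mul]
      apply Finset.sum_congr rfl
      intro e he
      rw [(Finset.mem_filter.mp he).2]
    have hcond : ∀ t ∈ T, (∀ l, t l ≤ M1 l) ∧ (∀ l j, t l ≠ 0 → t j ≠ 0 → l = j) := by
      intro t ht
      obtain ⟨e, heS, rfl⟩ := Finset.mem_image.mp ht
      constructor
      · intro l; exact hle e heS _
      · intro l j hl hj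
        have h1 : Fin.cons (α := fun _ => ZMod 2) 1 l = Fin.cons (α := fun _ => ZMod 2) 1 j :=
          hnorm e heS _ _ (cons_zero_ne_zero l) (cons_zero_ne_zero j) hl hj
            (by rw [leadN_cons_one, leadN_cons_one])
        have h2 := congrArg Fin.tail h1
        rwa [Fin.tail_cons, Fin.tail_cons] at h2
    have hb := PF zlin zlin_inj (∑ l, M1 l) M1 le_rfl T b hcond hsum2
    by_contra hSne
    obtain ⟨e, heS⟩ := Finset.nonempty_iff_ne_empty.mpr hSne
    have htT : τ e ∈ T := Finset.mem_image_of_mem τ heS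
    have hbt : b (τ e) = 0 := hb (τ e) htT
    set F := S.filter (fun e' => τ e' = τ e) with hFdef
    have heF : e ∈ F := Finset.mem_filter.mpr ⟨heS, rfl⟩
    have hinj : ∀ e1 ∈ F, ∀ e2 ∈ F, e0 e1 = e0 e2 → e1 = e2 := by
      intro e1 h1 e2 h2 h12
      have ht1 : τ e1 = τ e := (Finset.mem_filter.mp h1).2
      have ht2 : τ e2 = τ e := (Finset.mem_filter.mp h2).2
      funext v
      have hv : v = Fin.cons (v 0) (Fin.tail v) := (Fin.cons_self_tail v).symm
      have h01 : v 0 = 0 ∨ v 0 = 1 := by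
        have hd : ∀ a : ZMod 2, a = 0 ∨ a = 1 := by decide
        exact hd _
      rcases h01 with h | h
      · rw [hv, h]
        exact congrFun h12 (Fin.tail v)
      · rw [hv, h]
        exact congrFun (ht1.trans ht2.symm) (Fin.tail v)
    set S' := F.image e0 with hS'def
    have hS'sum : ∑ e' ∈ S', ∏ w, zlin w ^ (M0 w - e' w) = 0 := by
      rw [hS'def, Finset.sum_image hinj]
      exact hbt
    have hm0 : M0 0 = 0 := by
      show M (Fin.cons 0 0) = 0
      rw [cons_zero_zero]; exact hM0
    have hs0 : ∀ e' ∈ S', e' 0 = 0 := by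
      intro e' he'
      obtain ⟨e1, he1, rfl⟩ := Finset.mem_image.mp he'
      show e1 (Fin.cons 0 0) = 0
      rw [cons_zero_zero]
      exact hS0 e1 (Finset.mem_of_mem_filter e1 he1)
    have hnrm : ∀ e' ∈ S', IsNormal e' := by
      intro e' he'
      obtain ⟨e1, he1, rfl⟩ := Finset.mem_image.mp he'
      intro v w hv hw hev hew hlead
      have h1 := hnorm e1 (Finset.mem_of_mem_filter e1 he1) (Fin.cons 0 v) (Fin.cons 0 w)
        (fun hc => hv (cons_zero_eq_zero_iff.mp hc)) (fun hc => hw (cons_zero_eq_zero_iff.mp hc))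
        hev hew (by rw [leadN_cons_succ v hv, leadN_cons_succ w hw, hlead])
      have h2 := congrArg Fin.tail h1
      rwa [Fin.tail_cons, Fin.tail_cons] at h2
    have hbnd : ∀ e' ∈ S', ∀ w, e' w ≤ M0 w := by
      intro e' he' w
      obtain ⟨e1, he1, rfl⟩ := Finset.mem_image.mp he'
      exact hle e1 (Finset.mem_of_mem_filter e1 he1) _
    have hS'empty := ih S' M0 hm0 hs0 hnrm hbnd hS'sum
    have : e0 e ∈ S' := Finset.mem_image_of_mem e0 heF
    rw [hS'empty] at this
    simp at this


/-- The nonzero vectors of `F₂ⁿ`, indexing all nonzero homogeneous linear polynomials. -/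
abbrev NzVec (n : ℕ) := {v : Fin n → ZMod 2 // v ≠ 0}

/-- `z_α = α₁x₁ + ⋯ + α_nx_n`. -/
def zvec {n : ℕ} (α : NzVec n) : MvPolynomial (Fin n) (ZMod 2) :=
  ∑ j, C (α.1 j) * X j

lemma zvec_eq_zlin {n : ℕ} (α : NzVec n) : zvec α = zlin α.1 := rfl

/-- the relation set -/
def relSet (n : ℕ) : Set (MvPolynomial (NzVec n) (ZMod 2)) :=
  {p | ∃ α β γ : NzVec n, α ≠ β ∧ α ≠ γ ∧ β ≠ γ ∧ α.1 + β.1 + γ.1 = 0 ∧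
    p = X α * X β + X α * X γ + X β * X γ}

/-- normality of a monomial -/
def NormalM {n : ℕ} (d : NzVec n →₀ ℕ) : Prop :=
  ∀ α ∈ d.support, ∀ β ∈ d.support, leadN α.1 = leadN β.1 → α = β

/-- submodule of normal polynomials -/
def Nsub (n : ℕ) : Submodule (ZMod 2) (MvPolynomial (NzVec n) (ZMod 2)) where
  carrier := {p | ∀ d ∈ p.support, NormalM d}
  add_mem' := by
    classical
    intro p q hp hq d hd
    rcases Finset.mem_union.mp (MvPolynomial.support_add hd) with h | h
    · exact hp d h
    · exact hq d h
  zero_mem' := by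
    intro d hd
    simp at hd
  smul_mem' := by
    intro c p hp d hd
    exact hp d (MvPolynomial.support_smul hd)

lemma mem_Nsub {n : ℕ} {p : MvPolynomial (NzVec n) (ZMod 2)} :
    p ∈ Nsub n ↔ ∀ d ∈ p.support, NormalM d := Iff.rfl

/-- measure of a monomial -/
def muM {n : ℕ} (d : NzVec n →₀ ℕ) : ℕ := d.sum fun α k => k * valN α.1

lemma muM_add {n : ℕ} (d₁ d₂ : NzVec n →₀ ℕ) : muM (d₁ + d₂) = muM d₁ + muM d₂ :=
  Finsupp.sum_add_index (fun _ _ => by simp) (fun a _ k l => add_mul k l (valN a.1))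

lemma muM_single {n : ℕ} (α : NzVec n) (k : ℕ) : muM (Finsupp.single α k) = k * valN α.1 :=
  Finsupp.sum_single_index (by simp)

lemma stepA (n : ℕ) : ∀ (N : ℕ) (d : NzVec n →₀ ℕ), muM d ≤ N →
    (monomial d 1 : MvPolynomial (NzVec n) (ZMod 2)) ∈
      (Nsub n) ⊔ (Ideal.span (relSet n)).restrictScalars (ZMod 2) := by
  classical
  intro N
  induction N using Nat.strong_induction_on with
  | _ N ih =>
  intro d hd
  by_cases hnorm : NormalM d
  · apply Submodule.mem_sup_left
    rw [mem_Nsub]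
    intro d' hd'
    rw [MvPolynomial.support_monomial] at hd'
    simp only [one_ne_zero, if_false, Finset.mem_singleton] at hd'
    rwa [hd']
  · rw [NormalM] at hnorm
    push_neg at hnorm
    obtain ⟨α, hαs, β, hβs, hlead, hne⟩ := hnorm
    have hd2 : ∀ a : ZMod 2, a ≠ 0 → a = 1 := by decide
    -- γ
    have hγne : α.1 + β.1 ≠ 0 := by
      intro h
      apply hne
      apply Subtype.ext
      funext j
      have := congrFun h j
      revert this
      have : ∀ a b : ZMod 2, a + b = 0 → a = b := by decide
      exact this _ _
    set γ : NzVec n := ⟨α.1 + β.1, hγne⟩ with hγdef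
    have hαγ : α ≠ γ := by
      intro h
      apply β.2
      have := congrArg Subtype.val h
      funext j
      have h2 := congrFun this j
      revert h2
      simp only [hγdef, Pi.add_apply]
      have : ∀ a b : ZMod 2, a = a + b → b = 0 := by decide
      intro h2
      exact this _ _ h2
    have hβγ : β ≠ γ := by
      intro h
      apply α.2
      have := congrArg Subtype.val h
      funext j
      have h2 := congrFun this j
      revert h2
      simp only [hγdef, Pi.add_apply]
      have : ∀ a b : ZMod 2, b = a + b → a = 0 := by decide
      intro h2
      exact this _ _ h2
    -- val bounds
    obtain ⟨hL, hαL⟩ := leadN_spec α.2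
    have hγsmall : ∀ j : Fin n, j.1 ≤ leadN α.1 → (α.1 + β.1) j = 0 := by
      intro j hj
      rcases lt_or_eq_of_le hj with h | h
      · have h1 : α.1 j = 0 := by
          have := leadN_min α.1 (j := j.1) h j.2
          simpa using this
        have h2 : β.1 j = 0 := by
          have := leadN_min β.1 (j := j.1) (hlead ▸ h) j.2
          simpa using this
        simp [h1, h2]
      · have hj' : j = ⟨leadN α.1, hL⟩ := by ext; simp [h]
        obtain ⟨hL', hβL⟩ := leadN_spec β.2
        have hjβ : (⟨leadN β.1, hL'⟩ : Fin n) = j := by ext; simp [h, hlead]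
        have h1 : α.1 j = 1 := by rw [hj']; exact hd2 _ hαL
        have h2 : β.1 j = 1 := by rw [← hjβ]; exact hd2 _ hβL
        simp only [Pi.add_apply, h1, h2]
        decide
    have hγvalα : valN γ.1 < valN α.1 := valN_lt hL hγsmall hαL
    have hγvalβ : valN γ.1 < valN β.1 := by
      obtain ⟨hL', hβL⟩ := leadN_spec β.2
      refine valN_lt hL' (fun j hj => hγsmall j (by omega)) hβL
    -- split d
    set d₀ : NzVec n →₀ ℕ := d - Finsupp.single α 1 - Finsupp.single β 1 with hd₀def
    have hα1 : 1 ≤ d α := Nat.one_le_iff_ne_zero.mpr (Finsupp.mem_support_iff.mp hαs)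
    have hβ1 : 1 ≤ d β := Nat.one_le_iff_ne_zero.mpr (Finsupp.mem_support_iff.mp hβs)
    have hsplit : Finsupp.single α 1 + Finsupp.single β 1 + d₀ = d := by
      ext v
      simp only [Finsupp.add_apply, hd₀def, Finsupp.tsub_apply, Finsupp.single_apply]
      by_cases hvα : α = v
      · subst hvα
        rw [if_pos rfl, if_neg (Ne.symm hne)]
        omega
      · by_cases hvβ : β = v
        · subst hvβ
          rw [if_neg hvα, if_pos rfl]
          omega
        · rw [if_neg hvα, if_neg hvβ]
          omega
    set m₀ : MvPolynomial (NzVec n) (ZMod 2) := monomial d₀ 1 with hm₀def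
    have hXαβ : X α * X β * m₀ = monomial d 1 := by
      rw [hm₀def, MvPolynomial.X, MvPolynomial.X, MvPolynomial.monomial_mul,
        MvPolynomial.monomial_mul, hsplit, one_mul, one_mul]
    set g : MvPolynomial (NzVec n) (ZMod 2) := X α * X β + X α * X γ + X β * X γ with hgdef
    have hgmem : g ∈ relSet n := ⟨α, β, γ, hne, hαγ, hβγ, by
      funext j
      simp only [hγdef, Pi.add_apply, Pi.zero_apply]
      have : ∀ a b : ZMod 2, a + b + (a + b) = 0 := by decide
      exact this _ _, rfl⟩
    have hchar : (monomial d 1 : MvPolynomial (NzVec n) (ZMod 2)) =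
        g * m₀ + (X α * X γ * m₀ + X β * X γ * m₀) := by
      have h2 : ∀ x : MvPolynomial (NzVec n) (ZMod 2), x + x = 0 :=
        fun x => CharTwo.add_self_eq_zero x
      rw [← hXαβ]
      calc X α * X β * m₀
          = X α * X β * m₀ + ((X α * X γ * m₀ + X α * X γ * m₀)
            + (X β * X γ * m₀ + X β * X γ * m₀)) := by rw [h2, h2]; ring
        _ = g * m₀ + (X α * X γ * m₀ + X β * X γ * m₀) := by rw [hgdef]; ring
    set d₁ : NzVec n →₀ ℕ := Finsupp.single α 1 + Finsupp.single γ 1 + d₀ with hd₁def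
    set d₂ : NzVec n →₀ ℕ := Finsupp.single β 1 + Finsupp.single γ 1 + d₀ with hd₂def
    have hXαγ : X α * X γ * m₀ = monomial d₁ 1 := by
      rw [hm₀def, MvPolynomial.X, MvPolynomial.X, MvPolynomial.monomial_mul,
        MvPolynomial.monomial_mul, hd₁def, one_mul, one_mul]
    have hXβγ : X β * X γ * m₀ = monomial d₂ 1 := by
      rw [hm₀def, MvPolynomial.X, MvPolynomial.X, MvPolynomial.monomial_mul,
        MvPolynomial.monomial_mul, hd₂def, one_mul, one_mul]
    have hmud : muM d = valN α.1 + valN β.1 + muM d₀ := by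
      rw [← hsplit, muM_add, muM_add, muM_single, muM_single]
      ring
    have hmud₁ : muM d₁ = valN α.1 + valN γ.1 + muM d₀ := by
      rw [hd₁def, muM_add, muM_add, muM_single, muM_single]
      ring
    have hmud₂ : muM d₂ = valN β.1 + valN γ.1 + muM d₀ := by
      rw [hd₂def, muM_add, muM_add, muM_single, muM_single]
      ring
    have hNpos : 1 ≤ N := by omega
    have hm₁ : (monomial d₁ 1 : MvPolynomial (NzVec n) (ZMod 2)) ∈
        (Nsub n) ⊔ (Ideal.span (relSet n)).restrictScalars (ZMod 2) :=
      ih (N - 1) (by omega) d₁ (by omega)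
    have hm₂ : (monomial d₂ 1 : MvPolynomial (NzVec n) (ZMod 2)) ∈
        (Nsub n) ⊔ (Ideal.span (relSet n)).restrictScalars (ZMod 2) :=
      ih (N - 1) (by omega) d₂ (by omega)
    rw [hchar, hXαγ, hXβγ]
    apply Submodule.add_mem
    · apply Submodule.mem_sup_right
      exact Ideal.mul_mem_right m₀ _ (Ideal.subset_span hgmem)
    · exact Submodule.add_mem _ hm₁ hm₂

lemma stepA' (n : ℕ) (p : MvPolynomial (NzVec n) (ZMod 2)) :
    p ∈ (Nsub n) ⊔ (Ideal.span (relSet n)).restrictScalars (ZMod 2) := by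
  classical
  rw [MvPolynomial.as_sum p]
  apply Submodule.sum_mem
  intro d _
  have : (monomial d (coeff d p) : MvPolynomial (NzVec n) (ZMod 2))
      = coeff d p • monomial d 1 := by
    rw [MvPolynomial.smul_monomial, smul_eq_mul, mul_one]
  rw [this]
  exact Submodule.smul_mem _ _ (stepA n (muM d) d le_rfl)

/-- The kernel of `h` equals the ideal generated by the polynomials
`t_αt_β + t_αt_γ + t_βt_γ` with `α,β,γ` pairwise distinct nonzero and `α + β + γ = 0`. -/
theorem statement14 (n : ℕ) (hn : 0 < n)
    (R : Type) [CommRing R] [Algebra (ZMod 2) R]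
    [Algebra (MvPolynomial (Fin n) (ZMod 2)) R]
    [IsScalarTower (ZMod 2) (MvPolynomial (Fin n) (ZMod 2)) R]
    [IsLocalization.Away (∏ α : NzVec n, zvec α) R]
    (zinv : NzVec n → R)
    (hzinv : ∀ α, algebraMap (MvPolynomial (Fin n) (ZMod 2)) R (zvec α) * zinv α = 1) :
    RingHom.ker (MvPolynomial.aeval zinv :
        MvPolynomial (NzVec n) (ZMod 2) →ₐ[ZMod 2] R).toRingHom =
      Ideal.span {p : MvPolynomial (NzVec n) (ZMod 2) |
        ∃ α β γ : NzVec n, α ≠ β ∧ α ≠ γ ∧ β ≠ γ ∧ α.1 + β.1 + γ.1 = 0 ∧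
          p = X α * X β + X α * X γ + X β * X γ} := by
  classical
  have hset : {p : MvPolynomial (NzVec n) (ZMod 2) |
      ∃ α β γ : NzVec n, α ≠ β ∧ α ≠ γ ∧ β ≠ γ ∧ α.1 + β.1 + γ.1 = 0 ∧
        p = X α * X β + X α * X γ + X β * X γ} = relSet n := rfl
  rw [hset]
  set A := algebraMap (MvPolynomial (Fin n) (ZMod 2)) R with hA
  have heasy : Ideal.span (relSet n) ≤ RingHom.ker (MvPolynomial.aeval zinv :
      MvPolynomial (NzVec n) (ZMod 2) →ₐ[ZMod 2] R).toRingHom := by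
    rw [Ideal.span_le]
    rintro p ⟨α, β, γ, hab, hac, hbc, hsum0, rfl⟩
    rw [SetLike.mem_coe, RingHom.mem_ker]
    have hkey : zinv α * zinv β + zinv α * zinv γ + zinv β * zinv γ = 0 := by
      have h1 : zinv α * zinv β = A (zvec γ) * (zinv α * (zinv β * zinv γ)) := by
        calc zinv α * zinv β = (A (zvec γ) * zinv γ) * (zinv α * zinv β) := by
              rw [hzinv]; ring
          _ = A (zvec γ) * (zinv α * (zinv β * zinv γ)) := by ring
      have h2 : zinv α * zinv γ = A (zvec β) * (zinv α * (zinv β * zinv γ)) := by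
        calc zinv α * zinv γ = (A (zvec β) * zinv β) * (zinv α * zinv γ) := by
              rw [hzinv]; ring
          _ = A (zvec β) * (zinv α * (zinv β * zinv γ)) := by ring
      have h3 : zinv β * zinv γ = A (zvec α) * (zinv α * (zinv β * zinv γ)) := by
        calc zinv β * zinv γ = (A (zvec α) * zinv α) * (zinv β * zinv γ) := by
              rw [hzinv]; ring
          _ = A (zvec α) * (zinv α * (zinv β * zinv γ)) := by ring
      have e1 : zinv α * zinv β + zinv α * zinv γ + zinv β * zinv γ
          = (A (zvec γ) + A (zvec β) + A (zvec α)) * (zinv α * (zinv β * zinv γ)) := by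
        rw [add_mul, add_mul]
        exact congrArg₂ (· + ·) (congrArg₂ (· + ·) h1 h2) h3
      rw [e1, ← map_add, ← map_add]
      have hz : zvec γ + zvec β + zvec α = 0 := by
        rw [zvec_eq_zlin, zvec_eq_zlin, zvec_eq_zlin, ← zlin_add, ← zlin_add]
        rw [zlin_eq_zero_iff]
        have hrot : γ.1 + β.1 + α.1 = α.1 + β.1 + γ.1 := by abel
        rw [hrot, hsum0]
      rw [hz, map_zero, zero_mul]
    show (MvPolynomial.aeval zinv) (X α * X β + X α * X γ + X β * X γ) = 0
    rw [map_add, map_add, map_mul, map_mul, map_mul, aeval_X, aeval_X, aeval_X]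
    exact hkey
  refine le_antisymm ?_ heasy
  intro p hp
  rw [RingHom.mem_ker] at hp
  obtain ⟨q, hq, i, hi, rfl⟩ := Submodule.mem_sup.mp (stepA' n p)
  have hiI : i ∈ Ideal.span (relSet n) := hi
  have hiv : (MvPolynomial.aeval zinv) i = 0 := by
    have hm := heasy hiI
    rwa [RingHom.mem_ker] at hm
  have hqv : (MvPolynomial.aeval zinv) q = 0 := by
    have hpv : (MvPolynomial.aeval zinv) q + (MvPolynomial.aeval zinv) i = 0 := by
      rw [← map_add]; exact hp
    rw [hiv, add_zero] at hpv
    exact hpv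
  -- show q = 0
  set S := q.support with hSdef
  have hcoeff : ∀ d ∈ S, coeff d q = 1 := by
    intro d hd
    have h1 : coeff d q ≠ 0 := MvPolynomial.mem_support_iff.mp hd
    have h2 : ∀ c : ZMod 2, c ≠ 0 → c = 1 := by decide
    exact h2 _ h1
  have hqsum : q = ∑ d ∈ S, monomial d 1 := by
    conv_lhs => rw [MvPolynomial.as_sum q]
    exact Finset.sum_congr rfl (fun d hd => by rw [hcoeff d hd])
  have haevalq : ∑ d ∈ S, ∏ α : NzVec n, zinv α ^ d α = 0 := by
    rw [← hqv]
    conv_rhs => rw [hqsum]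
    rw [map_sum]
    apply Finset.sum_congr rfl
    intro d _
    rw [MvPolynomial.aeval_monomial, map_one, one_mul]
    exact (Finsupp.prod_fintype _ _ (fun α => pow_zero _)).symm
  set M : NzVec n → ℕ := fun α => ∑ d ∈ S, d α with hMdef
  have hdM : ∀ d ∈ S, ∀ α, d α ≤ M α := fun d hd α =>
    Finset.single_le_sum (f := fun d => d α) (fun _ _ => Nat.zero_le _) hd
  have hpow : ∀ d ∈ S, (∏ α : NzVec n, A (zvec α) ^ M α) * ∏ α : NzVec n, zinv α ^ d α
      = A (∏ α : NzVec n, zvec α ^ (M α - d α)) := by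
    intro d hd
    rw [map_prod, ← Finset.prod_mul_distrib]
    apply Finset.prod_congr rfl
    intro α _
    rw [map_pow]
    have hle := hdM d hd α
    calc A (zvec α) ^ M α * zinv α ^ d α
        = A (zvec α) ^ (M α - d α) * ((A (zvec α) * zinv α) ^ d α) := by
          rw [mul_pow, ← mul_assoc, ← pow_add]
          congr 2
          omega
      _ = A (zvec α) ^ (M α - d α) := by rw [hzinv α, one_pow, mul_one]
  have hpoly : A (∑ d ∈ S, ∏ α : NzVec n, zvec α ^ (M α - d α)) = 0 := by
    calc A (∑ d ∈ S, ∏ α : NzVec n, zvec α ^ (M α - d α))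
        = ∑ d ∈ S, A (∏ α : NzVec n, zvec α ^ (M α - d α)) := map_sum _ _ _
      _ = ∑ d ∈ S, (∏ α : NzVec n, A (zvec α) ^ M α) * ∏ α : NzVec n, zinv α ^ d α :=
          Finset.sum_congr rfl (fun d hd => (hpow d hd).symm)
      _ = (∏ α : NzVec n, A (zvec α) ^ M α) * ∑ d ∈ S, ∏ α : NzVec n, zinv α ^ d α := by
          rw [Finset.mul_sum]
      _ = 0 := by rw [haevalq, mul_zero]
  have htne : (∏ α : NzVec n, zvec α) ≠ 0 := by
    rw [Finset.prod_ne_zero_iff]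
    intro α _
    rw [zvec_eq_zlin]
    intro h
    exact α.2 ((zlin_eq_zero_iff α.1).mp h)
  have hAinj : Function.Injective (A :
      MvPolynomial (Fin n) (ZMod 2) →+* R) :=
    IsLocalization.injective R (powers_le_nonZeroDivisors_of_noZeroDivisors htne)
  have hpoly0 : ∑ d ∈ S, ∏ α : NzVec n, zvec α ^ (M α - d α) = 0 := by
    apply hAinj
    rw [hpoly, map_zero]
  set extd : (NzVec n →₀ ℕ) → ((Fin n → ZMod 2) → ℕ) :=
    fun d v => if h : v = 0 then 0 else d ⟨v, h⟩ with hextdef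
  set M' : (Fin n → ZMod 2) → ℕ := fun v => if h : v = 0 then 0 else M ⟨v, h⟩ with hM'def
  have hprodtr : ∀ d, ∏ α : NzVec n, zvec α ^ (M α - d α)
      = ∏ v : Fin n → ZMod 2, zlin v ^ (M' v - extd d v) := by
    intro d
    rw [← Finset.prod_filter_mul_prod_filter_not Finset.univ (fun v : Fin n → ZMod 2 => v ≠ 0)]
    have h2 : ∏ v ∈ Finset.univ.filter (fun v : Fin n → ZMod 2 => ¬ v ≠ 0),
        zlin v ^ (M' v - extd d v) = 1 := by
      apply Finset.prod_eq_one
      intro v hv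
      simp only [Finset.mem_filter, not_not] at hv
      rw [hv.2]
      simp only [hM'def, hextdef, dif_pos rfl]
      norm_num
    rw [h2, mul_one]
    rw [Finset.prod_subtype (p := fun v : Fin n → ZMod 2 => v ≠ 0)
      (Finset.univ.filter (fun v : Fin n → ZMod 2 => v ≠ 0))
      (by intro v; simp) (fun v => zlin v ^ (M' v - extd d v))]
    apply Finset.prod_congr rfl
    intro α _
    simp only [hM'def, hextdef, dif_neg α.2]
    rfl
  set S' := S.image extd with hS'def
  have hextinj : ∀ d1 ∈ S, ∀ d2 ∈ S, extd d1 = extd d2 → d1 = d2 := by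
    intro d1 _ d2 _ h
    ext α
    have hc := congrFun h α.1
    simp only [hextdef, dif_neg α.2] at hc
    exact hc
  have hS'sum : ∑ e ∈ S', ∏ v : Fin n → ZMod 2, zlin v ^ (M' v - e v) = 0 := by
    rw [hS'def, Finset.sum_image hextinj, ← hpoly0]
    exact Finset.sum_congr rfl (fun d _ => (hprodtr d).symm)
  have hs0 : ∀ e ∈ S', e 0 = 0 := by
    intro e he
    obtain ⟨d, _, rfl⟩ := Finset.mem_image.mp he
    simp only [hextdef, dif_pos rfl]
  have hnrm : ∀ e ∈ S', IsNormal e := by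
    intro e he
    obtain ⟨d, hdS, rfl⟩ := Finset.mem_image.mp he
    intro v w hv hw hev hew hlead
    simp only [hextdef, dif_neg hv, dif_neg hw] at hev hew
    have hdn : NormalM d := hq d hdS
    have h1 := hdn ⟨v, hv⟩ (Finsupp.mem_support_iff.mpr hev)
      ⟨w, hw⟩ (Finsupp.mem_support_iff.mpr hew) hlead
    exact congrArg Subtype.val h1
  have hbnd : ∀ e ∈ S', ∀ v, e v ≤ M' v := by
    intro e he v
    obtain ⟨d, hdS, rfl⟩ := Finset.mem_image.mp he
    by_cases h : v = 0
    · simp only [hextdef, hM'def, dif_pos h]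
      exact le_rfl
    · simp only [hextdef, hM'def, dif_neg h]
      exact hdM d hdS _
  have hS'empty := IND n S' M' (by simp only [hM'def, dif_pos rfl]) hs0 hnrm hbnd hS'sum
  have hSempty : S = ∅ := Finset.image_eq_empty.mp (hS'def ▸ hS'empty)
  have hq0 : q = 0 := MvPolynomial.support_eq_empty.mp hSempty
  rw [hq0, zero_add]
  exact hiI
end
end

section
/- Assume that z_1, …, z_m span the space of all homogeneous linear polynomials in x_1, …, x_n. Then h induces an isomorphism of F-algebras from the localization of F[t_1, …, t_m]/I at the (image of the) element t_1⋯t_m onto R; that is, (F[t_1, …, t_m]/I)[(t_1⋯t_m)^{-1}] ≅ R. -/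
open scoped TensorProduct
open MvPolynomial

noncomputable section

set_option synthInstance.maxHeartbeats 1000000
set_option maxHeartbeats 1000000

set_option maxHeartbeats 10000000 in
/-- If `z₁,…,z_m` span the linear forms, then `h` induces an isomorphism
`(F[t₁,…,t_m]/I)[(t₁⋯t_m)⁻¹] ≅ R`.  The isomorphism is pinned down by the requirement
that it is compatible with `h` on the image of `F[t₁,…,t_m]/I`. -/
theorem statement15
    (F : Type) [Field F] (n m : ℕ) (hn : 0 < n) (hm : 0 < m)
    (c : Fin m → Fin n → F) (hc : ∀ i, c i ≠ 0)
    (hspan : ∀ j : Fin n,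
      (X j : MvPolynomial (Fin n) F) ∈ Submodule.span F (Set.range (zpoly c)))
    (R : Type) [CommRing R] [Algebra F R] [Algebra (MvPolynomial (Fin n) F) R]
    [IsScalarTower F (MvPolynomial (Fin n) F) R]
    [IsLocalization.Away (∏ i, zpoly c i) R]
    (zinv : Fin m → R)
    (hzinv : ∀ i, algebraMap (MvPolynomial (Fin n) F) R (zpoly c i) * zinv i = 1) :
    ∃ e : Localization.Away
        (Ideal.Quotient.mk
          (RingHom.ker (MvPolynomial.aeval zinv : MvPolynomial (Fin m) F →ₐ[F] R).toRingHom)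
          (∏ i, X i)) ≃+* R,
      ∀ p : MvPolynomial (Fin m) F,
        e (algebraMap _ _
            (Ideal.Quotient.mk
              (RingHom.ker
                (MvPolynomial.aeval zinv : MvPolynomial (Fin m) F →ₐ[F] R).toRingHom) p))
          = MvPolynomial.aeval zinv p := by
  classical
  set φ : MvPolynomial (Fin m) F →+* R :=
    (MvPolynomial.aeval zinv : MvPolynomial (Fin m) F →ₐ[F] R).toRingHom with hφ
  set s : MvPolynomial (Fin m) F ⧸ RingHom.ker φ :=
    Ideal.Quotient.mk (RingHom.ker φ) (∏ i, X i) with hs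
  set ψ : (MvPolynomial (Fin m) F ⧸ RingHom.ker φ) →+* R := RingHom.kerLift φ with hψ
  have hφdef : ∀ p : MvPolynomial (Fin m) F, φ p = MvPolynomial.aeval zinv p := fun p => rfl
  have hprod : algebraMap (MvPolynomial (Fin n) F) R (∏ i, zpoly c i) * ∏ i, zinv i = 1 := by
    rw [map_prod, ← Finset.prod_mul_distrib]
    exact Finset.prod_eq_one fun i _ => hzinv i
  have hψs : ψ s = ∏ i, zinv i := by
    rw [hs, hψ, RingHom.kerLift_mk, hφdef, map_prod]
    exact Finset.prod_congr rfl fun i _ => MvPolynomial.aeval_X _ _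
  have hunit : IsUnit (ψ s) := by
    rw [hψs]
    exact IsUnit.of_mul_eq_one _ (by rw [mul_comm]; exact hprod)
  obtain ⟨e₀, he₀⟩ : ∃ e₀ : Localization.Away s →+* R,
      ∀ a, e₀ (algebraMap (MvPolynomial (Fin m) F ⧸ RingHom.ker φ) (Localization.Away s) a) = ψ a :=
    ⟨IsLocalization.Away.lift (S := Localization.Away s) s hunit,
      fun a => IsLocalization.Away.lift_eq s hunit a⟩
  have hinj : Function.Injective e₀ := by
    rw [injective_iff_map_eq_zero]
    intro x hx
    obtain ⟨⟨a, sk⟩, hax⟩ := IsLocalization.surj (Submonoid.powers s) x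
    have h1 : ψ a = 0 := by
      have h2 := congrArg e₀ hax
      rw [map_mul, hx, zero_mul, he₀] at h2
      exact h2.symm
    have h2 : a = 0 := RingHom.kerLift_injective φ (h1.trans (map_zero ψ).symm)
    rw [h2, map_zero] at hax
    have hu := IsLocalization.map_units (Localization.Away s) sk
    exact (hu.mul_left_eq_zero).mp hax
  have hsurj : Function.Surjective e₀ := by
    have hmulT : ∀ {a b : R}, a ∈ Set.range e₀ → b ∈ Set.range e₀ → a * b ∈ Set.range e₀ := by
      rintro a b ⟨x, rfl⟩ ⟨y, rfl⟩
      exact ⟨x * y, map_mul e₀ x y⟩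
    have haddT : ∀ {a b : R}, a ∈ Set.range e₀ → b ∈ Set.range e₀ → a + b ∈ Set.range e₀ := by
      rintro a b ⟨x, rfl⟩ ⟨y, rfl⟩
      exact ⟨x + y, map_add e₀ x y⟩
    have hpowT : ∀ {a : R} (k : ℕ), a ∈ Set.range e₀ → a ^ k ∈ Set.range e₀ := by
      rintro a k ⟨x, rfl⟩
      exact ⟨x ^ k, map_pow e₀ x k⟩
    have hzinvT : (∏ i, zinv i) ∈ Set.range e₀ :=
      ⟨algebraMap (MvPolynomial (Fin m) F ⧸ RingHom.ker φ) (Localization.Away s) s,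
        by rw [he₀, hψs]⟩
    have hsu : IsUnit (algebraMap (MvPolynomial (Fin m) F ⧸ RingHom.ker φ)
        (Localization.Away s) s) :=
      IsLocalization.map_units (Localization.Away s)
        (⟨s, Submonoid.mem_powers s⟩ : Submonoid.powers s)
    have hzT : algebraMap (MvPolynomial (Fin n) F) R (∏ i, zpoly c i) ∈ Set.range e₀ := by
      refine ⟨↑hsu.unit⁻¹, ?_⟩
      have h1 : e₀ ↑hsu.unit⁻¹ * e₀ (algebraMap (MvPolynomial (Fin m) F ⧸ RingHom.ker φ)
          (Localization.Away s) s) = 1 := by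
        rw [← map_mul, IsUnit.val_inv_mul, map_one]
      rw [he₀, hψs] at h1
      calc e₀ ↑hsu.unit⁻¹
          = e₀ ↑hsu.unit⁻¹ * (algebraMap (MvPolynomial (Fin n) F) R (∏ i, zpoly c i) *
              ∏ i, zinv i) := by rw [hprod, mul_one]
        _ = (e₀ ↑hsu.unit⁻¹ * ∏ i, zinv i) *
              algebraMap (MvPolynomial (Fin n) F) R (∏ i, zpoly c i) := by ring
        _ = algebraMap (MvPolynomial (Fin n) F) R (∏ i, zpoly c i) := by rw [h1, one_mul]
    have hziT : ∀ i, algebraMap (MvPolynomial (Fin n) F) R (zpoly c i) ∈ Set.range e₀ := by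
      intro i
      obtain ⟨w, hw⟩ := hzT
      refine ⟨algebraMap (MvPolynomial (Fin m) F ⧸ RingHom.ker φ) (Localization.Away s)
        (Ideal.Quotient.mk _ (∏ k ∈ Finset.univ.erase i, X k)) * w, ?_⟩
      rw [map_mul, hw, he₀, RingHom.kerLift_mk, hφdef]
      have h3 : (MvPolynomial.aeval zinv)
          (∏ k ∈ Finset.univ.erase i, (X k : MvPolynomial (Fin m) F))
          = ∏ k ∈ Finset.univ.erase i, zinv k := by
        rw [map_prod]
        exact Finset.prod_congr rfl fun k _ => MvPolynomial.aeval_X _ _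
      rw [h3, map_prod, ← Finset.mul_prod_erase Finset.univ _ (Finset.mem_univ i)]
      have key : (∏ k ∈ Finset.univ.erase i, zinv k) *
          ∏ k ∈ Finset.univ.erase i, algebraMap (MvPolynomial (Fin n) F) R (zpoly c k) = 1 := by
        rw [← Finset.prod_mul_distrib]
        exact Finset.prod_eq_one fun k _ => by rw [mul_comm]; exact hzinv k
      calc (∏ k ∈ Finset.univ.erase i, zinv k) *
            (algebraMap (MvPolynomial (Fin n) F) R (zpoly c i) *
              ∏ k ∈ Finset.univ.erase i, algebraMap (MvPolynomial (Fin n) F) R (zpoly c k))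
          = algebraMap (MvPolynomial (Fin n) F) R (zpoly c i) *
            ((∏ k ∈ Finset.univ.erase i, zinv k) *
              ∏ k ∈ Finset.univ.erase i, algebraMap (MvPolynomial (Fin n) F) R (zpoly c k)) := by
            ring
        _ = algebraMap (MvPolynomial (Fin n) F) R (zpoly c i) := by rw [key, mul_one]
    have hCT : ∀ a : F, algebraMap (MvPolynomial (Fin n) F) R (C a) ∈ Set.range e₀ := by
      intro a
      refine ⟨algebraMap (MvPolynomial (Fin m) F ⧸ RingHom.ker φ) (Localization.Away s)
        (Ideal.Quotient.mk _ (C a)), ?_⟩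
      rw [he₀, RingHom.kerLift_mk, hφdef, MvPolynomial.aeval_C,
        ← MvPolynomial.algebraMap_eq, ← IsScalarTower.algebraMap_apply]
    let W : Submodule F (MvPolynomial (Fin n) F) :=
      { carrier := {p | algebraMap (MvPolynomial (Fin n) F) R p ∈ Set.range e₀}
        add_mem' := fun hp hq => by
          simp only [Set.mem_setOf_eq, map_add] at *
          exact haddT hp hq
        zero_mem' := by
          simp only [Set.mem_setOf_eq, map_zero]
          exact ⟨0, map_zero e₀⟩
        smul_mem' := fun a p hp => by
          simp only [Set.mem_setOf_eq] at *
          rw [MvPolynomial.smul_eq_C_mul, map_mul]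
          exact hmulT (hCT a) hp }
    have hXT : ∀ j, algebraMap (MvPolynomial (Fin n) F) R (X j) ∈ Set.range e₀ := by
      intro j
      have hle : Submodule.span F (Set.range (zpoly c)) ≤ W := by
        rw [Submodule.span_le]
        rintro _ ⟨i, rfl⟩
        exact hziT i
      exact hle (hspan j)
    have hPT : ∀ p : MvPolynomial (Fin n) F,
        algebraMap (MvPolynomial (Fin n) F) R p ∈ Set.range e₀ := by
      intro p
      induction p using MvPolynomial.induction_on with
      | C a => exact hCT a
      | add p q hp hq => rw [map_add]; exact haddT hp hq
      | mul_X p j hp => rw [map_mul]; exact hmulT hp (hXT j)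
    intro r
    obtain ⟨⟨p, zk⟩, hr⟩ := IsLocalization.surj (Submonoid.powers (∏ i, zpoly c i)) r
    obtain ⟨k, hk⟩ := zk.2
    have hkey : r = algebraMap (MvPolynomial (Fin n) F) R p * (∏ i, zinv i) ^ k := by
      have h1 : algebraMap (MvPolynomial (Fin n) F) R ((∏ i, zpoly c i) ^ k) *
          (∏ i, zinv i) ^ k = 1 := by
        rw [map_pow, ← mul_pow, hprod, one_pow]
      calc r = r * (algebraMap (MvPolynomial (Fin n) F) R ((∏ i, zpoly c i) ^ k) *
              (∏ i, zinv i) ^ k) := by rw [h1, mul_one]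
        _ = (r * algebraMap (MvPolynomial (Fin n) F) R ((zk : MvPolynomial (Fin n) F))) *
              (∏ i, zinv i) ^ k := by rw [← hk]; ring
        _ = algebraMap (MvPolynomial (Fin n) F) R p * (∏ i, zinv i) ^ k := by rw [hr]
    have : r ∈ Set.range e₀ := by
      rw [hkey]
      exact hmulT (hPT p) (hpowT k hzinvT)
    exact this
  refine ⟨RingEquiv.ofBijective e₀ ⟨hinj, hsurj⟩, fun p => ?_⟩
  show e₀ (algebraMap (MvPolynomial (Fin m) F ⧸ RingHom.ker φ) (Localization.Away s) (Ideal.Quotient.mk _ p)) = _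
  rw [he₀, RingHom.kerLift_mk]
  exact hφdef p
end
end
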